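/- Basis-free transformation of the reduced feedback equation (equation (23)): let Q̄ ∈ ℝ^{q×q} be symmetric positive definite, S ∈ ℝ^{n×q}, P̂ ∈ ℝ^{n×n} symmetric positive semidefinite, and Â ∈ ℝ^{n×n}. Then a matrix L̂ ∈ ℝ^{n×n} satisfies (SQ̄⁻¹Sᵀ + SQ̄⁻¹Sᵀ P̂ SQ̄⁻¹Sᵀ) L̂ = −SQ̄⁻¹Sᵀ P̂ Â if and only if K̄ := Q̄⁻¹Sᵀ L̂ satisfies (Q̄ + SᵀP̂S) K̄ = −SᵀP̂Â. -/

import Mathlib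

open Matrix

lemma key_aux {n q : ℕ} (R : Matrix (Fin q) (Fin q) ℝ) (hR : R.PosDef)
    (Z : Matrix (Fin q) (Fin n) ℝ) (h : Zᵀ * R * Z = 0) : Z = 0 := by
  ext a j
  by_contra hne
  have hz : (fun i => Z i j) ≠ 0 := by
    intro h0
    exact hne (by simpa using congrFun h0 a)
  have hpos := hR.dotProduct_mulVec_pos (x := fun i => Z i j) hz
  have hval : (Zᵀ * R * Z) j j = dotProduct (star (fun i => Z i j)) (R *ᵥ (fun i => Z i j)) := by
    simp [Matrix.mul_apply, dotProduct, mulVec, Finset.mul_sum, Finset.sum_mul, mul_comm,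
      mul_assoc, mul_left_comm]
    rw [Finset.sum_comm]
    exact Finset.sum_congr rfl fun x _ => Finset.sum_congr rfl fun y _ => by ring
  rw [h] at hval
  simp only [Matrix.zero_apply] at hval
  rw [← hval] at hpos
  exact lt_irrefl _ hpos

lemma key {n q : ℕ} (R : Matrix (Fin q) (Fin q) ℝ) (hR : R.PosDef)
    (S : Matrix (Fin n) (Fin q) ℝ) (y : Matrix (Fin n) (Fin n) ℝ)
    (h : S * R * (Sᵀ * y) = 0) : Sᵀ * y = 0 := by
  apply key_aux R hR
  have : (Sᵀ * y)ᵀ * R * (Sᵀ * y) = yᵀ * (S * R * (Sᵀ * y)) := by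
    simp [Matrix.transpose_mul, Matrix.mul_assoc]
  rw [this, h, Matrix.mul_zero]

/-- Basis-free transformation of the reduced feedback equation (equation (23)):
`L̂` solves the transformed equation iff `K̄ = Q̄⁻¹Sᵀ L̂` solves the full equation. -/
theorem basis_free_feedback_equiv
    (n q : ℕ)
    (Qbar : Matrix (Fin q) (Fin q) ℝ) (hQbar : Qbar.PosDef)
    (S : Matrix (Fin n) (Fin q) ℝ)
    (Ph : Matrix (Fin n) (Fin n) ℝ) (hPh : Ph.PosSemidef)
    (Ah : Matrix (Fin n) (Fin n) ℝ)
    (Lh : Matrix (Fin n) (Fin n) ℝ) :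
    (S * Qbar⁻¹ * Sᵀ + S * Qbar⁻¹ * Sᵀ * Ph * (S * Qbar⁻¹ * Sᵀ)) * Lh
        = -(S * Qbar⁻¹ * Sᵀ * Ph * Ah)
      ↔ (Qbar + Sᵀ * Ph * S) * (Qbar⁻¹ * Sᵀ * Lh) = -(Sᵀ * Ph * Ah) := by
  have hRinv : (Qbar⁻¹).PosDef := hQbar.inv
  have hQQ : Qbar * Qbar⁻¹ = 1 := mul_nonsing_inv _ (isUnit_iff_isUnit_det _ |>.1 hQbar.isUnit)
  set y : Matrix (Fin n) (Fin n) ℝ := Lh + Ph * (S * (Qbar⁻¹ * (Sᵀ * Lh))) + Ph * Ah with hy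
  have hL : (S * Qbar⁻¹ * Sᵀ + S * Qbar⁻¹ * Sᵀ * Ph * (S * Qbar⁻¹ * Sᵀ)) * Lh
        + (S * Qbar⁻¹ * Sᵀ * Ph * Ah) = S * Qbar⁻¹ * (Sᵀ * y) := by
    simp only [hy, Matrix.mul_add, Matrix.add_mul, ← Matrix.mul_assoc]
  have hRr : (Qbar + Sᵀ * Ph * S) * (Qbar⁻¹ * Sᵀ * Lh) + (Sᵀ * Ph * Ah) = Sᵀ * y := by
    simp only [hy, Matrix.mul_add, Matrix.add_mul, Matrix.mul_assoc, ← Matrix.mul_assoc Qbar, hQQ,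
      Matrix.one_mul, Matrix.mul_add, Matrix.add_mul]
  constructor
  · intro h
    have h0 : S * Qbar⁻¹ * (Sᵀ * y) = 0 := by
      rw [← hL, h, neg_add_cancel]
    have := key Qbar⁻¹ hRinv S y h0
    have h2 := hRr
    rw [this] at h2
    linear_combination (norm := noncomm_ring) h2
  · intro h
    have h0 : Sᵀ * y = 0 := by rw [← hRr, h, neg_add_cancel]
    have : S * Qbar⁻¹ * (Sᵀ * y) = 0 := by rw [h0, Matrix.mul_zero]
    rw [← hL] at this
    linear_combination (norm := noncomm_ring) this
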